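/- For all real s ≥ 1/2 and 0 ≤ γ ≤ 1, the quantity F(-s;γ) := -(γ/2)(s - s⁻¹) + log s satisfies F(-s;γ) ≤ (1-γ)(s-1) + (2/3)|s-1|³. -/

import Mathlib

open Real

lemma aux_ge_one (s : ℝ) (hs : 1 ≤ s) :
    -(1/2) * (s - s⁻¹) + Real.log s ≤ 0 := by
  have h0 : 0 < s := lt_of_lt_of_le one_pos hs
  have hlog : 0 ≤ Real.log s := Real.log_nonneg hs
  have hsinh : Real.log s ≤ Real.sinh (Real.log s) :=
    Real.self_le_sinh_iff.mpr hlog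
  rw [Real.sinh_log h0] at hsinh
  linarith

lemma aux_le_one (s : ℝ) (h1 : 1/2 ≤ s) (h2 : s ≤ 1) :
    -(1/2) * (s - s⁻¹) + Real.log s ≤ 2/3 * (1 - s)^3 := by
  set h : ℝ → ℝ := fun x => 2/3 * (1 - x)^3 + (1/2) * (x - x⁻¹) - Real.log x with hh
  have hanti : AntitoneOn h (Set.Icc (1/2 : ℝ) 1) := by
    have hder : ∀ x ∈ interior (Set.Icc (1/2:ℝ) 1),
        HasDerivAt h ((1-x)^2 * ((1:ℝ)/(2*x^2) - 2)) x := by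
      intro x hx
      rw [interior_Icc] at hx
      have hx0 : 0 < x := lt_trans (by norm_num) hx.1
      have hx0' : x ≠ 0 := ne_of_gt hx0
      have d1 : HasDerivAt (fun x : ℝ => 2/3 * (1 - x)^3)
          (2/3 * (3 * (1 - x)^2 * (-1))) x := by
        have : HasDerivAt (fun x : ℝ => (1 - x)^3) (3 * (1 - x)^2 * (-1)) x := by
          have hb : HasDerivAt (fun x : ℝ => 1 - x) (-1) x := by
            simpa using (hasDerivAt_const x (1:ℝ)).fun_sub (hasDerivAt_id x)
          simpa using (hb.fun_pow 3)
        simpa [mul_assoc] using this.const_mul (2/3 : ℝ)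
      have d2 : HasDerivAt (fun x : ℝ => (1/2) * (x - x⁻¹))
          ((1/2) * (1 - (-(x^2)⁻¹))) x := by
        have : HasDerivAt (fun x : ℝ => x - x⁻¹) (1 - (-(x^2)⁻¹)) x :=
          (hasDerivAt_id x).sub (hasDerivAt_inv hx0')
        simpa using this.const_mul (1/2 : ℝ)
      have d3 : HasDerivAt Real.log x⁻¹ x := Real.hasDerivAt_log hx0'
      have : HasDerivAt h _ x := (d1.fun_add d2).fun_sub d3
      convert this using 1
      have hx2 : x^2 ≠ 0 := pow_ne_zero 2 hx0'
      field_simp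
      ring
    apply StrictAntiOn.antitoneOn
    apply strictAntiOn_of_hasDerivWithinAt_neg (convex_Icc _ _)
    · -- continuity
      apply ContinuousOn.sub
      apply ContinuousOn.add
      · fun_prop
      · apply ContinuousOn.mul continuousOn_const
        apply ContinuousOn.sub continuousOn_id
        apply ContinuousOn.inv₀ continuousOn_id
        intro x hx
        have : (0:ℝ) < x := lt_of_lt_of_le (by norm_num) hx.1
        exact ne_of_gt this
      · apply ContinuousOn.log continuousOn_id
        intro x hx
        have : (0:ℝ) < x := lt_of_lt_of_le (by norm_num) hx.1
        exact ne_of_gt this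
    · intro x hx
      exact ((hder x hx).hasDerivWithinAt)
    · intro x hx
      rw [interior_Icc] at hx
      have h1 : (1/2:ℝ) < x := hx.1
      have h2 : x < 1 := hx.2
      have ha : (0:ℝ) < (1-x)^2 := pow_pos (by linarith) 2
      have hb : (1:ℝ)/(2*x^2) - 2 < 0 := by
        rw [sub_neg, div_lt_iff₀ (by positivity)]
        nlinarith
      exact mul_neg_of_pos_of_neg ha hb
  have hmem1 : (1:ℝ) ∈ Set.Icc (1/2:ℝ) 1 := by norm_num
  have hmems : s ∈ Set.Icc (1/2:ℝ) 1 := ⟨h1, h2⟩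
  have := hanti hmems hmem1 h2
  simp only [hh] at this
  norm_num at this
  linarith

theorem stmt2 (s γ : ℝ) (hs : 1 / 2 ≤ s) (hγ0 : 0 ≤ γ) (hγ1 : γ ≤ 1) :
    -(γ / 2) * (s - s⁻¹) + Real.log s ≤ (1 - γ) * (s - 1) + 2 / 3 * |s - 1| ^ 3 := by
  have hs0 : 0 < s := lt_of_lt_of_le (by norm_num) hs
  have hlog : Real.log s ≤ s - 1 := Real.log_le_sub_one_of_pos hs0
  have hcube : (0:ℝ) ≤ 2/3 * |s - 1|^3 := by positivity
  have hg : -(1/2) * (s - s⁻¹) + Real.log s ≤ 2/3 * |s - 1|^3 := by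
    rcases le_or_gt s 1 with h | h
    · have := aux_le_one s hs h
      have habs : |s - 1| = 1 - s := by rw [abs_of_nonpos (by linarith)]; ring
      rw [habs]; linarith
    · have := aux_ge_one s h.le
      linarith
  nlinarith [mul_nonneg hγ0 (sub_nonneg.mpr hg), mul_nonneg (sub_nonneg.mpr hγ1) (sub_nonneg.mpr hlog)]
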